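/- (Sieve inequality) Let q be a power of an odd prime, m ≥ 2, and fix f(x) = a·x^2 + b·x + c with a, b, c ∈ F_{q^m}, a ≠ 0 and b^2 − 4ac ≠ 0. Let d be a divisor of q^m − 1 and let p_1, …, p_n be the distinct primes dividing q^m − 1 but not d. Let g be a monic divisor of x^m − 1 in F_q[x] and let g_1, …, g_k be the distinct monic irreducible polynomials dividing x^m − 1 but not g. Write N(e_1, e_2, h) for the number of α ∈ F_{q^m} with α simultaneously e_1-free and h-free and f(α) e_2-free, and abbreviate N := N(q^m − 1, q^m − 1, x^m − 1). Then N ≥ Σ_{i=1}^{n} N(p_i·d, d, g) + Σ_{i=1}^{n} N(d, p_i·d, g) + Σ_{i=1}^{k} N(d, d, g_i·g) − (2n + k − 1)·N(d, d, g). -/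
import Mathlib


open Polynomial

/-- For `e ∣ q^m - 1`, a nonzero element `α` of `F_{q^m}` is *e-free* if whenever `d ∣ e` and
`α = β^d` for some `β`, then `d = 1`. -/
def IsEFree {K : Type*} [Field K] (e : ℕ) (α : K) : Prop :=
  α ≠ 0 ∧ ∀ d : ℕ, d ∣ e → (∃ β : K, α = β ^ d) → d = 1

/-- The additive `F_q[x]`-module action on `F_{q^m}`: `h ∘ α = Σ aᵢ α^{qⁱ}` for
`h = Σ aᵢ xⁱ ∈ F_q[x]`. -/
noncomputable def polyAct (F : Type*) {K : Type*} [Field F] [Fintype F] [Field K] [Algebra F K]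
    (h : Polynomial F) (α : K) : K :=
  h.sum fun i a => algebraMap F K a * α ^ (Fintype.card F) ^ i

/-- For a monic divisor `g` of `x^m - 1`, an element `α ∈ F_{q^m}` is *g-free* if whenever
`h` is a monic divisor of `g` and `α = h ∘ β` for some `β`, then `h = 1`. -/
def IsGFree (F : Type*) {K : Type*} [Field F] [Fintype F] [Field K] [Algebra F K]
    (g : Polynomial F) (α : K) : Prop :=
  ∀ h : Polynomial F, h.Monic → h ∣ g → (∃ β : K, α = polyAct F h β) → h = 1

/-- `NCount F a b c e₁ e₂ g` is the number of `α ∈ K` such that `α` is `e₁`-free and `g`-free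
and `f(α) = a α² + b α + c` is `e₂`-free. -/
noncomputable def NCount (F : Type*) {K : Type*} [Field F] [Fintype F] [Field K] [Algebra F K]
    (a b c : K) (e₁ e₂ : ℕ) (g : Polynomial F) : ℕ :=
  Nat.card {α : K // IsEFree e₁ α ∧ IsGFree F g α ∧ IsEFree e₂ (a * α ^ 2 + b * α + c)}

section Aux

variable {F K : Type*} [Field F] [Fintype F] [Field K] [Algebra F K]

lemma isEFree_mono {e₁ e₂ : ℕ} (h : e₁ ∣ e₂) {α : K} (H : IsEFree e₂ α) : IsEFree e₁ α :=
  ⟨H.1, fun d hd => H.2 d (hd.trans h)⟩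

lemma isGFree_mono {g₁ g₂ : Polynomial F} (h : g₁ ∣ g₂) {α : K} (H : IsGFree F g₂ α) :
    IsGFree F g₁ α :=
  fun h' m hd => H h' m (hd.trans h)

lemma isEFree_combine {M e : ℕ} (he : e ∣ M) {α : K} (H : IsEFree e α)
    (Hp : ∀ ℓ : ℕ, ℓ.Prime → ℓ ∣ M → ¬ ℓ ∣ e → IsEFree (ℓ * e) α) : IsEFree M α := by
  refine ⟨H.1, fun d hd hpow => ?_⟩
  obtain ⟨β, hβ⟩ := hpow
  by_contra h1
  obtain ⟨ℓ, hℓp, hℓe⟩ := Nat.exists_prime_and_dvd h1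
  have hpow' : ∃ γ : K, α = γ ^ ℓ :=
    ⟨β ^ (d / ℓ), by rw [hβ, ← pow_mul, Nat.div_mul_cancel hℓe]⟩
  by_cases hc : ℓ ∣ e
  · exact hℓp.ne_one (H.2 ℓ hc hpow')
  · exact hℓp.ne_one ((Hp ℓ hℓp (hℓe.trans hd) hc).2 ℓ ⟨e, rfl⟩ hpow')

noncomputable def frobL
    (hchar : ∀ x y : K, (x + y) ^ (Fintype.card F) = x ^ (Fintype.card F) + y ^ (Fintype.card F)) :
    K →ₗ[F] K where
  toFun := fun x => x ^ (Fintype.card F)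
  map_add' := hchar
  map_smul' := fun a x => by
    simp only [RingHom.id_apply]
    rw [_root_.smul_pow, FiniteField.pow_card]

lemma frobL_pow_apply (hchar : ∀ x y : K, (x + y) ^ (Fintype.card F)
      = x ^ (Fintype.card F) + y ^ (Fintype.card F)) (i : ℕ) (x : K) :
    ((frobL hchar ^ i : Module.End F K)) x = x ^ (Fintype.card F) ^ i := by
  induction i generalizing x with
  | zero => simp
  | succ i ih =>
    rw [pow_succ, Module.End.mul_apply, ih, frobL]
    simp only [LinearMap.coe_mk, AddHom.coe_mk]
    rw [← pow_mul, mul_comm, ← pow_succ]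

lemma polyAct_eq_aeval (hchar : ∀ x y : K, (x + y) ^ (Fintype.card F)
      = x ^ (Fintype.card F) + y ^ (Fintype.card F)) (h : Polynomial F) (x : K) :
    polyAct F h x = (Polynomial.aeval (frobL hchar) h : Module.End F K) x := by
  rw [polyAct, Polynomial.aeval_def, Polynomial.eval₂_eq_sum, Polynomial.sum_def,
    Polynomial.sum_def, LinearMap.sum_apply]
  refine Finset.sum_congr rfl fun i _ => ?_
  rw [Module.End.mul_apply, frobL_pow_apply, Module.algebraMap_end_apply, Algebra.smul_def]

lemma polyAct_mul
    (hchar : ∀ x y : K, (x + y) ^ (Fintype.card F) = x ^ (Fintype.card F) + y ^ (Fintype.card F))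
    (h₁ h₂ : Polynomial F) (α : K) :
    polyAct F (h₁ * h₂) α = polyAct F h₁ (polyAct F h₂ α) := by
  rw [polyAct_eq_aeval hchar, polyAct_eq_aeval hchar, polyAct_eq_aeval hchar, map_mul,
    Module.End.mul_apply]

lemma isGFree_combine
    (hchar : ∀ x y : K, (x + y) ^ (Fintype.card F) = x ^ (Fintype.card F) + y ^ (Fintype.card F))
    {G g : Polynomial F} (hg : g ∣ G) {α : K} (H : IsGFree F g α)
    (Hp : ∀ π : Polynomial F, π.Monic → Irreducible π → π ∣ G → ¬ π ∣ g →
      IsGFree F (π * g) α) : IsGFree F G α := by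
  intro h hm hdvd hpow
  obtain ⟨β, hβ⟩ := hpow
  by_contra h1
  have hnu : ¬ IsUnit h := fun hu => h1 (hm.eq_one_of_isUnit hu)
  obtain ⟨π, hπirr, hπdvd⟩ := WfDvdMonoid.exists_irreducible_factor hnu hm.ne_zero
  have hπ0 : π ≠ 0 := hπirr.ne_zero
  have hlc : π.leadingCoeff ≠ 0 := leadingCoeff_ne_zero.2 hπ0
  have hu : IsUnit (C π.leadingCoeff⁻¹) := isUnit_C.2 (inv_ne_zero hlc).isUnit
  set π' := π * C π.leadingCoeff⁻¹ with hπ'def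
  have hπ'm : π'.Monic := monic_mul_leadingCoeff_inv hπ0
  have hassoc : Associated π π' := ⟨hu.unit, by rw [IsUnit.unit_spec]⟩
  have hπ'irr : Irreducible π' := hassoc.irreducible hπirr
  have hπ'dvd : π' ∣ h := hassoc.symm.dvd.trans hπdvd
  obtain ⟨t, ht⟩ := hπ'dvd
  have hα : ∃ γ : K, α = polyAct F π' γ :=
    ⟨polyAct F t β, by rw [hβ, ht, polyAct_mul hchar]⟩
  by_cases hc : π' ∣ g
  · exact hπ'irr.ne_one (H π' hπ'm hc hα)
  · exact hπ'irr.ne_one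
      (Hp π' hπ'm hπ'irr ((ht ▸ dvd_mul_right π' t).trans hdvd) hc π' hπ'm (dvd_mul_right _ _) hα)

end Aux

/-- **Sieve inequality.** If `p₁, …, pₙ` are the distinct primes dividing `q^m - 1` but not
`d`, and `g₁, …, g_k` the distinct monic irreducible polynomials dividing `x^m - 1` but not
`g`, then `N ≥ Σᵢ N(pᵢ d, d, g) + Σᵢ N(d, pᵢ d, g) + Σᵢ N(d, d, gᵢ g) − (2n + k − 1) N(d, d, g)`,
where `N = N(q^m − 1, q^m − 1, x^m − 1)`. -/
theorem sieve_inequality (p r q m : ℕ) (hp : p.Prime) (hodd : Odd p) (hr : 0 < r)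
    (hq : q = p ^ r) (hm : 2 ≤ m)
    (F K : Type*) [Field F] [Fintype F] [Field K] [Algebra F K]
    (hF : Fintype.card F = q) (hK : Module.finrank F K = m)
    (a b c : K) (ha : a ≠ 0) (hdisc : b ^ 2 - 4 * a * c ≠ 0)
    (d : ℕ) (hd : d ∣ q ^ m - 1)
    (n : ℕ) (P : Fin n → ℕ) (hPinj : Function.Injective P)
    (hP : ∀ i, (P i).Prime ∧ P i ∣ q ^ m - 1 ∧ ¬ P i ∣ d)
    (hPall : ∀ p' : ℕ, p'.Prime → p' ∣ q ^ m - 1 → ¬ p' ∣ d → ∃ i, P i = p')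
    (g : Polynomial F) (hg : g.Monic) (hgdvd : g ∣ X ^ m - 1)
    (k : ℕ) (G : Fin k → Polynomial F) (hGinj : Function.Injective G)
    (hG : ∀ i, (G i).Monic ∧ Irreducible (G i) ∧ G i ∣ (X : Polynomial F) ^ m - 1 ∧ ¬ G i ∣ g)
    (hGall : ∀ h : Polynomial F, h.Monic → Irreducible h → h ∣ (X : Polynomial F) ^ m - 1 →
      ¬ h ∣ g → ∃ i, G i = h) :
    (NCount F a b c (q ^ m - 1) (q ^ m - 1) ((X : Polynomial F) ^ m - 1) : ℤ) ≥
      (∑ i, (NCount F a b c (P i * d) d g : ℤ)) +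
      (∑ i, (NCount F a b c d (P i * d) g : ℤ)) +
      (∑ i, (NCount F a b c d d (G i * g) : ℤ)) -
      ((2 * n + k : ℤ) - 1) * (NCount F a b c d d g : ℤ) := by
  classical
  -- K is finite
  haveI : Module.Finite F K :=
    Module.finite_of_finrank_pos (by rw [hK]; omega)
  haveI : Finite K := Module.finite_of_finite F
  haveI : Fintype K := Fintype.ofFinite K
  -- the characteristic fact
  have hchar : ∀ x y : K, (x + y) ^ (Fintype.card F)
      = x ^ (Fintype.card F) + y ^ (Fintype.card F) := by
    set ℓ := ringChar F with hℓ
    haveI : CharP F ℓ := ringChar.charP F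
    have hℓp : ℓ.Prime := CharP.char_is_prime F ℓ
    haveI : Fact ℓ.Prime := ⟨hℓp⟩
    obtain ⟨s, -, hcard⟩ := FiniteField.card F ℓ
    haveI : CharP K ℓ := charP_of_injective_algebraMap (algebraMap F K).injective ℓ
    haveI : ExpChar K ℓ := ExpChar.prime hℓp
    intro x y
    rw [hcard]
    exact add_pow_char_pow x y ℓ s
  -- counting setup
  set base : K → Prop := fun α => IsEFree d α ∧ IsGFree F g α ∧ IsEFree d (a * α ^ 2 + b * α + c) with hbase
  set S : Finset K := Finset.univ.filter base with hS
  have hcount : ∀ (e₁ e₂ : ℕ) (gg : Polynomial F),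
      (∀ α : K, (IsEFree e₁ α ∧ IsGFree F gg α ∧ IsEFree e₂ (a * α ^ 2 + b * α + c)) → base α) →
      (NCount F a b c e₁ e₂ gg : ℤ)
        = ∑ α ∈ S, if IsEFree e₁ α ∧ IsGFree F gg α ∧ IsEFree e₂ (a * α ^ 2 + b * α + c) then (1 : ℤ) else 0 := by
    intro e₁ e₂ gg hcond
    rw [NCount, Nat.card_eq_fintype_card, Fintype.card_subtype]
    rw [Finset.card_filter]
    push_cast
    rw [Finset.sum_subset (Finset.subset_univ S)]
    intro x _ hx
    rw [if_neg]
    intro hcx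
    exact hx (by simpa [hS] using hcond x hcx)
  -- membership in S gives base
  have hmemS : ∀ α ∈ S, base α := fun α hα => (Finset.mem_filter.mp hα).2
  -- rewrite all the counts
  rw [hcount _ _ _ (fun α hcond => ⟨isEFree_mono hd hcond.1, isGFree_mono hgdvd hcond.2.1,
        isEFree_mono hd hcond.2.2⟩),
    hcount d d g (fun α hcond => hcond),
    Finset.sum_congr rfl (fun i (_ : i ∈ (Finset.univ : Finset (Fin n))) =>
      hcount (P i * d) d g (fun α hcond =>
        ⟨isEFree_mono (dvd_mul_left d (P i)) hcond.1, hcond.2.1, hcond.2.2⟩)),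
    Finset.sum_congr rfl (fun i (_ : i ∈ (Finset.univ : Finset (Fin n))) =>
      hcount d (P i * d) g (fun α hcond =>
        ⟨hcond.1, hcond.2.1, isEFree_mono (dvd_mul_left d (P i)) hcond.2.2⟩)),
    Finset.sum_congr rfl (fun i (_ : i ∈ (Finset.univ : Finset (Fin k))) =>
      hcount d d (G i * g) (fun α hcond =>
        ⟨hcond.1, isGFree_mono (dvd_mul_left g (G i)) hcond.2.1, hcond.2.2⟩))]
  -- base indicator sums to constants on S
  have hbase_sum : ∑ α ∈ S, (if IsEFree d α ∧ IsGFree F g α ∧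
      IsEFree d (a * α ^ 2 + b * α + c) then (1 : ℤ) else 0) = ∑ α ∈ S, (1 : ℤ) := by
    refine Finset.sum_congr rfl fun α hα => if_pos (hmemS α hα)
  rw [hbase_sum, Finset.mul_sum, Finset.sum_comm (s := Finset.univ) (t := S),
    Finset.sum_comm (s := Finset.univ) (t := S), Finset.sum_comm (s := Finset.univ) (t := S)]
  rw [ge_iff_le, ← Finset.sum_add_distrib, ← Finset.sum_add_distrib, ← Finset.sum_sub_distrib]
  refine Finset.sum_le_sum fun α hα => ?_
  obtain ⟨hb1, hb2, hb3⟩ := hmemS α hα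
  -- generic indicator-sum bounds
  have hub : ∀ (N : ℕ) (cc : Fin N → Prop) (inst : ∀ i, Decidable (cc i)),
      (∑ i, @ite ℤ (cc i) (inst i) 1 0) ≤ N := by
    intro N cc inst
    calc (∑ i, @ite ℤ (cc i) (inst i) 1 0) ≤ ∑ _i : Fin N, (1 : ℤ) :=
          Finset.sum_le_sum fun i _ => by by_cases hc : cc i <;> simp [hc]
      _ = N := by simp
  have hub' : ∀ (N : ℕ) (cc : Fin N → Prop) (inst : ∀ i, Decidable (cc i)), (∃ i, ¬ cc i) →
      (∑ i, @ite ℤ (cc i) (inst i) 1 0) ≤ (N : ℤ) - 1 := by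
    rintro N cc inst ⟨i₀, hi₀⟩
    have hlt : (∑ i, @ite ℤ (cc i) (inst i) 1 0) < ∑ _i : Fin N, (1 : ℤ) := by
      refine Finset.sum_lt_sum (fun i _ => by by_cases hc : cc i <;> simp [hc])
        ⟨i₀, Finset.mem_univ _, by rw [if_neg hi₀]; norm_num⟩
    have : (∑ _i : Fin N, (1 : ℤ)) = N := by simp
    omega
  have hT0 : (0 : ℤ) ≤ if IsEFree (q ^ m - 1) α ∧ IsGFree F ((X : Polynomial F) ^ m - 1) α ∧
      IsEFree (q ^ m - 1) (a * α ^ 2 + b * α + c) then (1 : ℤ) else 0 := by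
    split <;> norm_num
  by_cases hall :
      (∀ i, IsEFree (P i * d) α ∧ IsGFree F g α ∧ IsEFree d (a * α ^ 2 + b * α + c)) ∧
      (∀ i, IsEFree d α ∧ IsGFree F g α ∧ IsEFree (P i * d) (a * α ^ 2 + b * α + c)) ∧
      (∀ i, IsEFree d α ∧ IsGFree F (G i * g) α ∧ IsEFree d (a * α ^ 2 + b * α + c))
  · obtain ⟨hall1, hall2, hall3⟩ := hall
    have hT : IsEFree (q ^ m - 1) α ∧ IsGFree F ((X : Polynomial F) ^ m - 1) α ∧
        IsEFree (q ^ m - 1) (a * α ^ 2 + b * α + c) := by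
      refine ⟨?_, ?_, ?_⟩
      · refine isEFree_combine hd hb1 fun ℓ hℓp hℓdvd hℓnd => ?_
        obtain ⟨i, hi⟩ := hPall ℓ hℓp hℓdvd hℓnd
        exact hi ▸ (hall1 i).1
      · refine isGFree_combine hchar hgdvd hb2 fun π hπm hπirr hπdvd hπnd => ?_
        obtain ⟨i, hi⟩ := hGall π hπm hπirr hπdvd hπnd
        exact hi ▸ (hall3 i).2.1
      · refine isEFree_combine hd hb3 fun ℓ hℓp hℓdvd hℓnd => ?_
        obtain ⟨i, hi⟩ := hPall ℓ hℓp hℓdvd hℓnd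
        exact hi ▸ (hall2 i).2.2
    have e1 : (∑ i, if IsEFree (P i * d) α ∧ IsGFree F g α ∧
        IsEFree d (a * α ^ 2 + b * α + c) then (1 : ℤ) else 0) = n := by
      rw [Finset.sum_congr rfl fun i _ => if_pos (hall1 i)]; simp
    have e2 : (∑ i, if IsEFree d α ∧ IsGFree F g α ∧
        IsEFree (P i * d) (a * α ^ 2 + b * α + c) then (1 : ℤ) else 0) = n := by
      rw [Finset.sum_congr rfl fun i _ => if_pos (hall2 i)]; simp
    have e3 : (∑ i, if IsEFree d α ∧ IsGFree F (G i * g) α ∧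
        IsEFree d (a * α ^ 2 + b * α + c) then (1 : ℤ) else 0) = k := by
      rw [Finset.sum_congr rfl fun i _ => if_pos (hall3 i)]; simp
    rw [e1, e2, e3, if_pos hT]
    ring_nf
    linarith
  · have b1 : (∑ i : Fin n, if IsEFree (P i * d) α ∧ IsGFree F g α ∧
        IsEFree d (a * α ^ 2 + b * α + c) then (1 : ℤ) else 0) ≤ (n : ℤ) := hub n _ _
    have b2 : (∑ i : Fin n, if IsEFree d α ∧ IsGFree F g α ∧
        IsEFree (P i * d) (a * α ^ 2 + b * α + c) then (1 : ℤ) else 0) ≤ (n : ℤ) := hub n _ _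
    have b3 : (∑ i : Fin k, if IsEFree d α ∧ IsGFree F (G i * g) α ∧
        IsEFree d (a * α ^ 2 + b * α + c) then (1 : ℤ) else 0) ≤ (k : ℤ) := hub k _ _
    rcases not_and_or.mp hall with h' | h'
    · have s1 : (∑ i : Fin n, if IsEFree (P i * d) α ∧ IsGFree F g α ∧
          IsEFree d (a * α ^ 2 + b * α + c) then (1 : ℤ) else 0) ≤ (n : ℤ) - 1 :=
        hub' n _ _ (not_forall.mp h')
      linarith
    · rcases not_and_or.mp h' with h'' | h''
      · have s2 : (∑ i : Fin n, if IsEFree d α ∧ IsGFree F g α ∧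
            IsEFree (P i * d) (a * α ^ 2 + b * α + c) then (1 : ℤ) else 0) ≤ (n : ℤ) - 1 :=
          hub' n _ _ (not_forall.mp h'')
        linarith
      · have s3 : (∑ i : Fin k, if IsEFree d α ∧ IsGFree F (G i * g) α ∧
            IsEFree d (a * α ^ 2 + b * α + c) then (1 : ℤ) else 0) ≤ (k : ℤ) - 1 :=
          hub' k _ _ (not_forall.mp h'')
        linarith
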